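/- Let L be a complete lattice, Q a partially ordered set, and f : L → Q a monotone map. If f respects joins and C is a cocomplete category, then for every functor M : Q → C there is an isomorphism f_*f^*M ≅ M ∘ f ∘ f♭ (the lower pixelization of M equals the pullback of M along f ∘ f♭), natural in M. Dually, if f respects meets and C is a complete category, then for every functor M : Q → C there is an isomorphism f_†f^*M ≅ M ∘ f ∘ f♯, natural in M. -/

import Mathlib

open CategoryTheory Limits

universe v u

/-- The map `f♭ : Q → L`, `f♭(q) = sSup {x | f x ≤ q}`, as a monotone map. -/
def flatHom {L : Type v} [CompleteLattice L] {Q : Type v} [PartialOrder Q] (f : L →o Q) :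
    Q →o L :=
  ⟨fun q => sSup {x : L | f x ≤ q}, fun _ _ h => sSup_le_sSup fun _ hx => le_trans hx h⟩

/-- The map `f♯ : Q → L`, `f♯(q) = sInf {x | q ≤ f x}`, as a monotone map. -/
def sharpHom {L : Type v} [CompleteLattice L] {Q : Type v} [PartialOrder Q] (f : L →o Q) :
    Q →o L :=
  ⟨fun q => sInf {x : L | q ≤ f x}, fun _ _ h => sInf_le_sInf fun _ hx => le_trans h hx⟩

/-- If `f : L → Q` respects joins, the lower pixelization `f_*f^*` is naturally isomorphic
(in `M`) to precomposition with `f ∘ f♭`; dually, if `f` respects meets, the upper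
pixelization `f_†f^*` is naturally isomorphic to precomposition with `f ∘ f♯`. -/
theorem pixelization_iso_pullback {L : Type v} [CompleteLattice L]
    {Q : Type v} [PartialOrder Q] (f : L →o Q) :
    ((∀ (S : Set L) (q : Q), (∀ x ∈ S, f x ≤ q) → f (sSup S) ≤ q) →
      ∀ (C : Type u) [Category.{v} C] [HasColimits C],
        Nonempty
          (((Functor.whiskeringLeft L Q C).obj f.monotone.functor ⋙ f.monotone.functor.lan :
              (Q ⥤ C) ⥤ (Q ⥤ C)) ≅
            (Functor.whiskeringLeft Q Q C).obj (f.comp (flatHom f)).monotone.functor)) ∧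
    ((∀ (S : Set L) (q : Q), (∀ x ∈ S, q ≤ f x) → q ≤ f (sInf S)) →
      ∀ (C : Type u) [Category.{v} C] [HasLimits C],
        Nonempty
          (((Functor.whiskeringLeft L Q C).obj f.monotone.functor ⋙ f.monotone.functor.ran :
              (Q ⥤ C) ⥤ (Q ⥤ C)) ≅
            (Functor.whiskeringLeft Q Q C).obj (f.comp (sharpHom f)).monotone.functor)) := by
  constructor
  · intro hj C _ _
    have gc : GaloisConnection f (flatHom f) := fun x q =>
      ⟨fun h => le_sSup h, fun h =>
        le_trans (f.mono h) (hj {x : L | f x ≤ q} q fun _ hx => hx)⟩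
    have adj1 : f.monotone.functor ⊣ (flatHom f).monotone.functor := gc.adjunction
    have adj2 : (Functor.whiskeringLeft Q L C).obj (flatHom f).monotone.functor ⊣
        (Functor.whiskeringLeft L Q C).obj f.monotone.functor := adj1.whiskerLeft C
    have lanAdj := f.monotone.functor.lanAdjunction C
    have e1 : f.monotone.functor.lan ≅
        (Functor.whiskeringLeft Q L C).obj (flatHom f).monotone.functor :=
      lanAdj.leftAdjointUniq adj2
    refine ⟨Functor.isoWhiskerLeft ((Functor.whiskeringLeft L Q C).obj f.monotone.functor) e1 ≪≫ ?_⟩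
    exact Iso.refl _
  · intro hm C _ _
    have gc : GaloisConnection (sharpHom f) f := fun q x =>
      ⟨fun h => le_trans (hm {y : L | q ≤ f y} q fun _ hx => hx) (f.mono h),
       fun h => sInf_le h⟩
    have adj1 : (sharpHom f).monotone.functor ⊣ f.monotone.functor := gc.adjunction
    have adj2 : (Functor.whiskeringLeft L Q C).obj f.monotone.functor ⊣
        (Functor.whiskeringLeft Q L C).obj (sharpHom f).monotone.functor := adj1.whiskerLeft C
    have ranAdj := f.monotone.functor.ranAdjunction C
    have e1 : (Functor.whiskeringLeft Q L C).obj (sharpHom f).monotone.functor ≅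
        f.monotone.functor.ran := adj2.rightAdjointUniq ranAdj
    refine ⟨Functor.isoWhiskerLeft ((Functor.whiskeringLeft L Q C).obj f.monotone.functor) e1.symm ≪≫ ?_⟩
    exact Iso.refl _
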